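/- For every n ≥ 0, the number of permutations of {1,...,n} avoiding the generalized pattern 12-3 and containing exactly one occurrence of the generalized pattern 31-2 equals n(n-1)(n-2)(3n-5)/24. -/

import Mathlib

/-- The value of the permutation at position `i` (0-indexed), or 0 if out of range. -/
def permVal {n : ℕ} (π : Equiv.Perm (Fin n)) (i : ℕ) : ℕ :=
  if h : i < n then (π ⟨i, h⟩ : ℕ) else 0

/-- Number of occurrences of the generalized pattern 12-3. -/
def occ12_3 {n : ℕ} (π : Equiv.Perm (Fin n)) : ℕ :=
  ((Finset.range n ×ˢ Finset.range n).filter (fun p =>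
    p.1 + 1 < p.2 ∧ permVal π p.1 < permVal π (p.1 + 1) ∧
      permVal π (p.1 + 1) < permVal π p.2)).card

/-- Number of occurrences of the generalized pattern 13-2. -/
def occ13_2 {n : ℕ} (π : Equiv.Perm (Fin n)) : ℕ :=
  ((Finset.range n ×ˢ Finset.range n).filter (fun p =>
    p.1 + 1 < p.2 ∧ permVal π p.1 < permVal π p.2 ∧
      permVal π p.2 < permVal π (p.1 + 1))).card

/-- Number of occurrences of the generalized pattern 21-3. -/
def occ21_3 {n : ℕ} (π : Equiv.Perm (Fin n)) : ℕ :=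
  ((Finset.range n ×ˢ Finset.range n).filter (fun p =>
    p.1 + 1 < p.2 ∧ permVal π (p.1 + 1) < permVal π p.1 ∧
      permVal π p.1 < permVal π p.2)).card

/-- Number of occurrences of the generalized pattern 23-1. -/
def occ23_1 {n : ℕ} (π : Equiv.Perm (Fin n)) : ℕ :=
  ((Finset.range n ×ˢ Finset.range n).filter (fun p =>
    p.1 + 1 < p.2 ∧ permVal π p.2 < permVal π p.1 ∧
      permVal π p.1 < permVal π (p.1 + 1))).card

/-- Number of occurrences of the generalized pattern 31-2. -/
def occ31_2 {n : ℕ} (π : Equiv.Perm (Fin n)) : ℕ :=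
  ((Finset.range n ×ˢ Finset.range n).filter (fun p =>
    p.1 + 1 < p.2 ∧ permVal π (p.1 + 1) < permVal π p.2 ∧
      permVal π p.2 < permVal π p.1)).card

/-- Number of occurrences of the generalized pattern 32-1. -/
def occ32_1 {n : ℕ} (π : Equiv.Perm (Fin n)) : ℕ :=
  ((Finset.range n ×ˢ Finset.range n).filter (fun p =>
    p.1 + 1 < p.2 ∧ permVal π p.2 < permVal π (p.1 + 1) ∧
      permVal π (p.1 + 1) < permVal π p.1)).card

open Finset

namespace Stmt5Aux

def lft (p x : ℕ) : ℕ := if p ≤ x then x + 1 else x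

lemma lft_lt_lft {p a b : ℕ} : lft p a < lft p b ↔ a < b := by
  unfold lft; split <;> split <;> omega

lemma self_lt_lft {p x : ℕ} : p < lft p x ↔ p ≤ x := by
  unfold lft; split <;> omega

lemma lft_lt_self {p x : ℕ} : lft p x < p ↔ x < p := by
  unfold lft; split <;> omega

def Φ {n : ℕ} (p : Fin (n+1)) (e : Equiv.Perm (Fin n)) : Equiv.Perm (Fin (n+1)) :=
  (finSuccEquiv n).trans ((e.optionCongr).trans (finSuccEquiv' p).symm)

lemma Φ_zero {n : ℕ} (p : Fin (n+1)) (e : Equiv.Perm (Fin n)) : Φ p e 0 = p := by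
  simp [Φ]

lemma Φ_succ {n : ℕ} (p : Fin (n+1)) (e : Equiv.Perm (Fin n)) (i : Fin n) :
    Φ p e i.succ = p.succAbove (e i) := by
  simp [Φ]

lemma val_succAbove {n : ℕ} (p : Fin (n+1)) (i : Fin n) :
    ((p.succAbove i : Fin (n+1)) : ℕ) = lft (p : ℕ) (i : ℕ) := by
  rw [Fin.succAbove]
  unfold lft
  by_cases h : (i:ℕ) < (p:ℕ)
  · rw [if_pos (by simpa [Fin.lt_def] using h), if_neg (by omega)]; simp
  · rw [if_neg (by simpa [Fin.lt_def] using h), if_pos (by omega)]; simp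

lemma permVal_lt {n : ℕ} (π : Equiv.Perm (Fin n)) {i : ℕ} (h : i < n) : permVal π i < n := by
  unfold permVal; rw [dif_pos h]; exact (π ⟨i, h⟩).isLt

lemma permVal_Φ_zero {n : ℕ} (p : Fin (n+1)) (e : Equiv.Perm (Fin n)) :
    permVal (Φ p e) 0 = (p : ℕ) := by
  unfold permVal
  rw [dif_pos (Nat.succ_pos n)]
  have : (⟨0, Nat.succ_pos n⟩ : Fin (n+1)) = 0 := rfl
  rw [this, Φ_zero]

lemma permVal_Φ_succ {n : ℕ} (p : Fin (n+1)) (e : Equiv.Perm (Fin n)) (i : ℕ) (h : i < n) :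
    permVal (Φ p e) (i+1) = lft (p : ℕ) (permVal e i) := by
  unfold permVal
  rw [dif_pos (by omega : i + 1 < n + 1), dif_pos h]
  have : (⟨i+1, by omega⟩ : Fin (n+1)) = (⟨i, h⟩ : Fin n).succ := rfl
  rw [this, Φ_succ, val_succAbove]

lemma occ12_3_Φ {n : ℕ} (p : Fin (n+1)) (e : Equiv.Perm (Fin n)) :
    occ12_3 (Φ p e) = occ12_3 e +
      ((range n).filter (fun j => 1 ≤ j ∧ (p:ℕ) < lft p (permVal e 0) ∧
        lft p (permVal e 0) < lft p (permVal e j))).card := by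
  have hv0 := permVal_Φ_zero p e
  have hvs := permVal_Φ_succ p e
  unfold occ12_3
  rw [card_filter, card_filter, card_filter, Finset.sum_product, Finset.sum_product,
      Finset.sum_range_succ']
  dsimp only
  congr 1
  · refine Finset.sum_congr rfl (fun i hi => ?_)
    rw [Finset.sum_range_succ']
    simp only [Nat.not_lt_zero, false_and, if_false, add_zero]
    rw [mem_range] at hi
    refine Finset.sum_congr rfl (fun j hj => ?_)
    rw [mem_range] at hj
    refine if_congr ?_ rfl rfl
    by_cases hij : i + 1 < j
    · rw [hvs i (by omega), hvs (i+1) (by omega), hvs j (by omega), lft_lt_lft, lft_lt_lft]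
      omega
    · omega
  · rw [Finset.sum_range_succ']
    simp only [Nat.not_lt_zero, false_and, if_false, add_zero, and_false]
    refine Finset.sum_congr rfl (fun j hj => ?_)
    rw [mem_range] at hj
    refine if_congr ?_ rfl rfl
    rw [hv0, hvs 0 (by omega), hvs j (by omega)]
    omega

lemma occ31_2_Φ {n : ℕ} (p : Fin (n+1)) (e : Equiv.Perm (Fin n)) :
    occ31_2 (Φ p e) = occ31_2 e +
      ((range n).filter (fun j => 1 ≤ j ∧ lft p (permVal e 0) < lft p (permVal e j) ∧
        lft p (permVal e j) < (p:ℕ))).card := by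
  have hv0 := permVal_Φ_zero p e
  have hvs := permVal_Φ_succ p e
  unfold occ31_2
  rw [card_filter, card_filter, card_filter, Finset.sum_product, Finset.sum_product,
      Finset.sum_range_succ']
  dsimp only
  congr 1
  · refine Finset.sum_congr rfl (fun i hi => ?_)
    rw [Finset.sum_range_succ']
    simp only [Nat.not_lt_zero, false_and, if_false, add_zero]
    rw [mem_range] at hi
    refine Finset.sum_congr rfl (fun j hj => ?_)
    rw [mem_range] at hj
    refine if_congr ?_ rfl rfl
    by_cases hij : i + 1 < j
    · rw [hvs i (by omega), hvs (i+1) (by omega), hvs j (by omega), lft_lt_lft, lft_lt_lft]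
      omega
    · omega
  · rw [Finset.sum_range_succ']
    simp only [Nat.not_lt_zero, false_and, if_false, add_zero, and_false]
    refine Finset.sum_congr rfl (fun j hj => ?_)
    rw [mem_range] at hj
    refine if_congr ?_ rfl rfl
    rw [hv0, hvs 0 (by omega), hvs j (by omega)]
    omega

lemma card_pos_eq_card_val {N : ℕ} (e : Equiv.Perm (Fin N)) (P : ℕ → Prop) [DecidablePred P]
    (hP : ¬ P (permVal e 0)) :
    ((range N).filter (fun j => 1 ≤ j ∧ P (permVal e j))).card = ((range N).filter P).card := by
  have hcong : ∀ j ∈ range N, (1 ≤ j ∧ P (permVal e j)) ↔ P (permVal e j) := by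
    intro j hj
    constructor
    · exact fun h => h.2
    · intro h
      refine ⟨?_, h⟩
      rcases Nat.eq_zero_or_pos j with rfl | h1
      · exact absurd h hP
      · exact h1
  rw [Finset.filter_congr hcong]
  refine Finset.card_bij (fun j _ => permVal e j) ?_ ?_ ?_
  · intro a ha
    rw [mem_filter, mem_range] at ha ⊢
    exact ⟨permVal_lt e ha.1, ha.2⟩
  · intro a ha b hb hab
    rw [mem_filter, mem_range] at ha hb
    unfold permVal at hab
    rw [dif_pos ha.1, dif_pos hb.1] at hab
    have := e.injective (Fin.ext hab)
    simpa using this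
  · intro v hv
    rw [mem_filter, mem_range] at hv
    have hkey : permVal e ((e.symm ⟨v, hv.1⟩ : Fin N) : ℕ) = v := by
      unfold permVal
      rw [dif_pos (e.symm ⟨v, hv.1⟩).isLt]
      rw [Fin.eta, Equiv.apply_symm_apply]
    refine ⟨(e.symm ⟨v, hv.1⟩ : ℕ), ?_, hkey⟩
    rw [mem_filter, mem_range, hkey]
    exact ⟨(e.symm ⟨v, hv.1⟩).isLt, hv.2⟩

lemma card_val_gt (N a : ℕ) : ((range N).filter (fun v => a < v)).card = N - (a+1) := by
  have h : (range N).filter (fun v => a < v) = Finset.Ico (a+1) N := by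
    ext v; simp [Finset.mem_Ico]; omega
  rw [h, Nat.card_Ico]

lemma card_val_between (N a b : ℕ) :
    ((range N).filter (fun v => a < v ∧ v < b)).card = min b N - (a+1) := by
  have h : (range N).filter (fun v => a < v ∧ v < b) = Finset.Ico (a+1) (min b N) := by
    ext v; simp [Finset.mem_Ico]; omega
  rw [h, Nat.card_Ico]

lemma extra12 {n : ℕ} (p : Fin (n+2)) (e : Equiv.Perm (Fin (n+1))) :
    ((range (n+1)).filter (fun j => 1 ≤ j ∧ (p:ℕ) < lft p (permVal e 0) ∧
      lft p (permVal e 0) < lft p (permVal e j))).card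
    = if (p:ℕ) ≤ permVal e 0 then n - permVal e 0 else 0 := by
  by_cases hp : (p:ℕ) ≤ permVal e 0
  · rw [if_pos hp]
    have hcong : ∀ j ∈ range (n+1), (1 ≤ j ∧ (p:ℕ) < lft p (permVal e 0) ∧
        lft p (permVal e 0) < lft p (permVal e j)) ↔ (1 ≤ j ∧ permVal e 0 < permVal e j) := by
      intro j hj
      rw [self_lt_lft, lft_lt_lft]
      exact ⟨fun h => ⟨h.1, h.2.2⟩, fun h => ⟨h.1, hp, h.2⟩⟩
    rw [Finset.filter_congr hcong, card_pos_eq_card_val e _ (lt_irrefl _), card_val_gt]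
    omega
  · rw [if_neg hp, Finset.card_eq_zero, Finset.filter_eq_empty_iff]
    intro j hj h
    exact hp (self_lt_lft.mp h.2.1)

lemma extra31 {n : ℕ} (p : Fin (n+2)) (e : Equiv.Perm (Fin (n+1))) :
    ((range (n+1)).filter (fun j => 1 ≤ j ∧ lft p (permVal e 0) < lft p (permVal e j) ∧
      lft p (permVal e j) < (p:ℕ))).card
    = if permVal e 0 < (p:ℕ) then (p:ℕ) - 1 - permVal e 0 else 0 := by
  have he0 : permVal e 0 < n + 1 := permVal_lt e (by omega)
  have hcong : ∀ j ∈ range (n+1), (1 ≤ j ∧ lft p (permVal e 0) < lft p (permVal e j) ∧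
      lft p (permVal e j) < (p:ℕ)) ↔ (1 ≤ j ∧ (permVal e 0 < permVal e j ∧ permVal e j < (p:ℕ))) := by
    intro j hj
    rw [lft_lt_lft, lft_lt_self]
  rw [Finset.filter_congr hcong,
    card_pos_eq_card_val e (fun v => permVal e 0 < v ∧ v < (p:ℕ)) (by omega),
    card_val_between]
  have hp2 : (p:ℕ) < n + 2 := p.isLt
  split_ifs <;> omega

lemma cond_iff {n : ℕ} (p : Fin (n+2)) (e : Equiv.Perm (Fin (n+1))) (k s : ℕ) :
    (occ12_3 (Φ p e) = 0 ∧ occ31_2 (Φ p e) = k ∧ permVal (Φ p e) 0 = s) ↔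
    ((p:ℕ) = s ∧ occ12_3 e = 0 ∧ (s ≤ permVal e 0 → permVal e 0 = n) ∧
      occ31_2 e + (if permVal e 0 < s then s - 1 - permVal e 0 else 0) = k) := by
  rw [occ12_3_Φ, extra12, occ31_2_Φ, extra31, permVal_Φ_zero]
  have he0 : permVal e 0 < n + 1 := permVal_lt e (by omega)
  split_ifs <;> omega

lemma Φ_inj {n : ℕ} : Function.Injective
    (fun x : Fin (n+1) × Equiv.Perm (Fin n) => Φ x.1 x.2) := by
  rintro ⟨p, e⟩ ⟨q, f⟩ h
  dsimp at h
  have hp : p = q := by rw [← Φ_zero p e, ← Φ_zero q f, h]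
  subst hp
  have he : e = f := by
    apply Equiv.ext; intro i
    apply Fin.succAbove_right_injective (p := p)
    rw [← Φ_succ p e i, ← Φ_succ p f i, h]
  rw [he]

lemma Φ_bij {n : ℕ} : Function.Bijective
    (fun x : Fin (n+1) × Equiv.Perm (Fin n) => Φ x.1 x.2) :=
  (Fintype.bijective_iff_injective_and_card _).mpr ⟨Φ_inj, by
    simp [Fintype.card_perm, Nat.factorial_succ]⟩

def Dn (n k s : ℕ) : ℕ := (univ.filter (fun π : Equiv.Perm (Fin n) =>
    occ12_3 π = 0 ∧ occ31_2 π = k ∧ permVal π 0 = s)).card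

lemma Dn_rec (n k s : ℕ) (hs : s < n+2) :
    Dn (n+2) k s = (univ.filter (fun e : Equiv.Perm (Fin (n+1)) =>
      occ12_3 e = 0 ∧ (s ≤ permVal e 0 → permVal e 0 = n) ∧
      occ31_2 e + (if permVal e 0 < s then s - 1 - permVal e 0 else 0) = k)).card := by
  unfold Dn
  symm
  refine Finset.card_bij (fun e _ => Φ ⟨s, hs⟩ e) ?_ ?_ ?_
  · intro e he
    rw [mem_filter] at he ⊢
    exact ⟨mem_univ _, (cond_iff ⟨s, hs⟩ e k s).mpr ⟨rfl, he.2⟩⟩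
  · intro a ha b hb hab
    have h2 := Φ_inj (n := n+1) (a₁ := (⟨s,hs⟩, a)) (a₂ := (⟨s,hs⟩, b)) hab
    exact (Prod.ext_iff.mp h2).2
  · intro π hπ
    rw [mem_filter] at hπ
    obtain ⟨⟨q, e⟩, hx⟩ := Φ_bij.2 π
    dsimp at hx
    have hc := (cond_iff q e k s).mp (by rw [hx]; exact hπ.2)
    have hq : q = ⟨s, hs⟩ := Fin.ext hc.1
    subst hq
    exact ⟨e, by rw [mem_filter]; exact ⟨mem_univ _, hc.2⟩, hx⟩

lemma Dn_zero (n k s : ℕ) (hn : 0 < n) (h : n ≤ s) : Dn n k s = 0 := by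
  unfold Dn
  rw [Finset.card_eq_zero, Finset.filter_eq_empty_iff]
  rintro π - ⟨-, -, h3⟩
  have := permVal_lt π hn
  omega

lemma occ12_3_one (π : Equiv.Perm (Fin 1)) : occ12_3 π = 0 := by
  unfold occ12_3
  rw [Finset.card_eq_zero, Finset.filter_eq_empty_iff]
  rintro ⟨a, b⟩ hab
  rw [Finset.mem_product, Finset.mem_range, Finset.mem_range] at hab
  rintro ⟨h1, -⟩
  omega

lemma occ31_2_one (π : Equiv.Perm (Fin 1)) : occ31_2 π = 0 := by
  unfold occ31_2
  rw [Finset.card_eq_zero, Finset.filter_eq_empty_iff]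
  rintro ⟨a, b⟩ hab
  rw [Finset.mem_product, Finset.mem_range, Finset.mem_range] at hab
  rintro ⟨h1, -⟩
  omega

lemma base1 : Dn 1 0 0 = 1 := by
  unfold Dn
  rw [Finset.filter_true_of_mem, Finset.card_univ]
  · simp [Fintype.card_perm]
  · intro π _
    refine ⟨occ12_3_one π, occ31_2_one π, ?_⟩
    unfold permVal
    rw [dif_pos one_pos]
    have := (π ⟨0, one_pos⟩).isLt
    omega

lemma base2 : Dn 1 1 0 = 0 := by
  unfold Dn
  rw [Finset.card_eq_zero, Finset.filter_eq_empty_iff]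
  rintro π - ⟨-, h2, -⟩
  rw [occ31_2_one π] at h2
  omega

lemma recF0 (n : ℕ) : Dn (n+2) 0 0 = Dn (n+1) 0 n := by
  rw [Dn_rec n 0 0 (by omega)]
  unfold Dn
  rw [card_filter, card_filter]
  refine Finset.sum_congr rfl (fun e _ => ?_)
  have he0 : permVal e 0 < n+1 := permVal_lt e (by omega)
  split_ifs <;> omega

lemma recF (n p : ℕ) : Dn (n+2) 0 (p+1) = Dn (n+1) 0 p + (if p+1 ≤ n then Dn (n+1) 0 n else 0) := by
  by_cases hs : p + 1 < n + 2
  · rw [Dn_rec n 0 (p+1) hs]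
    by_cases hc : p + 1 ≤ n
    · rw [if_pos hc]
      unfold Dn
      rw [card_filter, card_filter, card_filter, ← Finset.sum_add_distrib]
      refine Finset.sum_congr rfl (fun e _ => ?_)
      have he0 : permVal e 0 < n+1 := permVal_lt e (by omega)
      split_ifs <;> omega
    · rw [if_neg hc, add_zero]
      unfold Dn
      rw [card_filter, card_filter]
      refine Finset.sum_congr rfl (fun e _ => ?_)
      have he0 : permVal e 0 < n+1 := permVal_lt e (by omega)
      split_ifs <;> omega
  · rw [Dn_zero (n+2) 0 (p+1) (by omega) (by omega), Dn_zero (n+1) 0 p (by omega) (by omega),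
      if_neg (by omega)]

lemma recG0 (n : ℕ) : Dn (n+2) 1 0 = Dn (n+1) 1 n := by
  rw [Dn_rec n 1 0 (by omega)]
  unfold Dn
  rw [card_filter, card_filter]
  refine Finset.sum_congr rfl (fun e _ => ?_)
  have he0 : permVal e 0 < n+1 := permVal_lt e (by omega)
  split_ifs <;> omega

lemma recG1 (n : ℕ) : Dn (n+2) 1 1 = Dn (n+1) 1 0 + (if 1 ≤ n then Dn (n+1) 1 n else 0) := by
  rw [Dn_rec n 1 1 (by omega)]
  by_cases hc : 1 ≤ n
  · rw [if_pos hc]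
    unfold Dn
    rw [card_filter, card_filter, card_filter, ← Finset.sum_add_distrib]
    refine Finset.sum_congr rfl (fun e _ => ?_)
    have he0 : permVal e 0 < n+1 := permVal_lt e (by omega)
    split_ifs <;> omega
  · rw [if_neg hc, add_zero]
    unfold Dn
    rw [card_filter, card_filter]
    refine Finset.sum_congr rfl (fun e _ => ?_)
    have he0 : permVal e 0 < n+1 := permVal_lt e (by omega)
    split_ifs <;> omega

lemma recG (n p : ℕ) (hp : p + 2 ≤ n + 1) :
    Dn (n+2) 1 (p+2) = Dn (n+1) 1 (p+1) + (if p+2 ≤ n then Dn (n+1) 1 n else 0)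
      + Dn (n+1) 0 p := by
  rw [Dn_rec n 1 (p+2) (by omega)]
  by_cases hc : p + 2 ≤ n
  · rw [if_pos hc]
    unfold Dn
    rw [card_filter, card_filter, card_filter, card_filter, ← Finset.sum_add_distrib,
      ← Finset.sum_add_distrib]
    refine Finset.sum_congr rfl (fun e _ => ?_)
    have he0 : permVal e 0 < n+1 := permVal_lt e (by omega)
    split_ifs <;> omega
  · rw [if_neg hc, add_zero]
    unfold Dn
    rw [card_filter, card_filter, card_filter, ← Finset.sum_add_distrib]
    refine Finset.sum_congr rfl (fun e _ => ?_)
    have he0 : permVal e 0 < n+1 := permVal_lt e (by omega)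
    split_ifs <;> omega

lemma F_top (n : ℕ) : Dn (n+1) 0 n = 1 := by
  induction n with
  | zero => exact base1
  | succ m ih => rw [recF m m, if_neg (by omega), add_zero, ih]

lemma F_low (n : ℕ) : ∀ s, s < n → Dn (n+1) 0 s = s + 1 := by
  induction n with
  | zero => intro s hs; omega
  | succ m ih =>
    intro s hs
    rcases s with - | p
    · rw [recF0, F_top]
    · rw [recF m p, if_pos (by omega), ih p (by omega), F_top]

lemma G_top (n : ℕ) : Dn (n+1) 1 n = n.choose 2 := by
  induction n with
  | zero => exact base2
  | succ m ih =>
    rcases m with - | k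
    · rw [recG1 0, if_neg (by omega), add_zero, base2]
      decide
    · rw [recG (k+1) k (by omega), if_neg (by omega), add_zero, ih,
        F_low (k+1) k (by omega)]
      have h1 : (k+1+1).choose 2 = (k+1).choose 1 + (k+1).choose 2 :=
        Nat.choose_succ_succ (k+1) 1
      have h2 : (k+1).choose 1 = k+1 := Nat.choose_one_right (k+1)
      omega

lemma G_low (n : ℕ) : ∀ s, s < n →
    Dn (n+1) 1 s + (n-1-s).choose 3 = s.choose 2 + n.choose 3 := by
  induction n with
  | zero => intro s hs; omega
  | succ m ih =>
    intro s hs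
    rcases s with - | s'
    · rw [recG0, G_top]
      have h1 := Nat.choose_succ_succ m 2
      have h2 : m + 1 - 1 - 0 = m := by omega
      rw [h2]
      simpa using h1.symm
    · rcases s' with - | p
      · rw [recG1, if_pos (by omega), G_top]
        have h0 := ih 0 (by omega)
        have e1 : m - 1 - 0 = m - 1 := by omega
        have e2 : m + 1 - 1 - 1 = m - 1 := by omega
        rw [e1] at h0
        rw [e2]
        have h1 : (m+1).choose 3 = m.choose 2 + m.choose 3 := Nat.choose_succ_succ m 2
        have h2 : Nat.choose 0 2 = 0 := rfl
        have h3 : Nat.choose (0+1) 2 = 0 := rfl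
        omega
      · rw [recG m p (by omega), if_pos (by omega), G_top, F_low m p (by omega)]
        have hIH := ih (p+1) (by omega)
        have e1 : m + 1 - 1 - (p + 2) = m - 1 - (p+1) := by omega
        rw [e1]
        have h1 : (m+1).choose 3 = m.choose 2 + m.choose 3 := Nat.choose_succ_succ m 2
        have h2 : (p+1+1).choose 2 = (p+1).choose 1 + (p+1).choose 2 :=
          Nat.choose_succ_succ (p+1) 1
        have h3 : (p+1).choose 1 = p+1 := Nat.choose_one_right (p+1)
        omega

lemma total (m : ℕ) :
    (univ.filter (fun π : Equiv.Perm (Fin (m+1)) => occ12_3 π = 0 ∧ occ31_2 π = 1)).card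
      = ∑ s ∈ range (m+1), Dn (m+1) 1 s := by
  rw [Finset.card_eq_sum_card_fiberwise (f := fun π => permVal π 0) (t := range (m+1))
      (fun π _ => by rw [mem_coe, mem_range]; exact permVal_lt π (by omega))]
  refine Finset.sum_congr rfl (fun s _ => ?_)
  unfold Dn
  rw [Finset.filter_filter]
  simp only [and_assoc]

lemma hockey (r m : ℕ) : ∑ j ∈ range m, j.choose r = m.choose (r+1) := by
  induction m with
  | zero => simp
  | succ k ih =>
    rw [Finset.sum_range_succ, ih]
    have h : (k+1).choose (r+1) = k.choose r + k.choose (r+1) := Nat.choose_succ_succ k r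
    omega

lemma sumG (m : ℕ) :
    ∑ s ∈ range (m+1), Dn (m+1) 1 s + m.choose 4
      = m.choose 2 + m.choose 3 + m * m.choose 3 := by
  rw [Finset.sum_range_succ, G_top]
  have hsum : ∑ s ∈ range m, (Dn (m+1) 1 s + (m-1-s).choose 3)
      = ∑ s ∈ range m, (s.choose 2 + m.choose 3) :=
    Finset.sum_congr rfl (fun s hs => by rw [mem_range] at hs; rw [G_low m s hs])
  rw [Finset.sum_add_distrib, Finset.sum_add_distrib] at hsum
  have h1 : ∑ s ∈ range m, (m-1-s).choose 3 = m.choose 4 := by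
    rw [Finset.sum_range_reflect (fun j => j.choose 3) m, hockey]
  have h2 : ∑ s ∈ range m, s.choose 2 = m.choose 3 := hockey 2 m
  have h3 : ∑ _s ∈ range m, m.choose 3 = m * m.choose 3 := by
    rw [Finset.sum_const, card_range, smul_eq_mul]
  omega

lemma c3 (m : ℕ) : ((m.choose 3 : ℕ) : ℚ) = m*(m-1)*(m-2)/6 := by
  induction m with
  | zero => norm_num
  | succ k ih =>
    rw [Nat.choose_succ_succ k 2]
    push_cast
    rw [ih, Nat.cast_choose_two]
    field_simp
    ring

lemma c4 (m : ℕ) : ((m.choose 4 : ℕ) : ℚ) = m*(m-1)*(m-2)*(m-3)/24 := by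
  induction m with
  | zero => norm_num
  | succ k ih =>
    rw [Nat.choose_succ_succ k 3]
    push_cast
    rw [ih, c3]
    field_simp
    ring

end Stmt5Aux

theorem stmt5 (n : ℕ) :
    ((Finset.univ.filter (fun π : Equiv.Perm (Fin n) =>
      occ12_3 π = 0 ∧ occ31_2 π = 1)).card : ℚ) =
      (n : ℚ) * ((n : ℚ) - 1) * ((n : ℚ) - 2) * (3 * (n : ℚ) - 5) / 24 := by
  cases n with
  | zero =>
    have h0 : (Finset.univ.filter (fun π : Equiv.Perm (Fin 0) =>
        occ12_3 π = 0 ∧ occ31_2 π = 1)) = ∅ := by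
      rw [Finset.filter_eq_empty_iff]
      rintro π - ⟨-, h2⟩
      have hz : occ31_2 π = 0 := by
        unfold occ31_2
        rw [Finset.card_eq_zero, Finset.filter_eq_empty_iff]
        rintro ⟨a, b⟩ hab
        rw [Finset.mem_product, Finset.mem_range, Finset.mem_range] at hab
        intro _
        omega
      omega
    rw [h0]
    norm_num
  | succ m =>
    rw [Stmt5Aux.total m]
    set T := ∑ s ∈ Finset.range (m+1), Stmt5Aux.Dn (m+1) 1 s with hTdef
    have h := Stmt5Aux.sumG m
    rw [← hTdef] at h
    have hQ : (T : ℚ) + ((m.choose 4 : ℕ) : ℚ)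
        = ((m.choose 2 : ℕ) : ℚ) + ((m.choose 3 : ℕ) : ℚ) + (m : ℚ) * ((m.choose 3 : ℕ) : ℚ) := by
      exact_mod_cast congrArg (fun x : ℕ => (x : ℚ)) h
    rw [Stmt5Aux.c3, Stmt5Aux.c4, Nat.cast_choose_two] at hQ
    push_cast
    linear_combination hQ
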